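/- Let L be a factorial and almost prolongable language over a finite alphabet with L_n nonempty for every n, and suppose there exists a real α ≥ 1 with p(n)/n^α → 1 as n → ∞. Then lim_{n→∞} p(n+1)/p(n) = 1 and lim_{n→∞} r(n)/p(n) = 1. (Corollary 2.5 of the paper, stated via the paper's combinatorial criterion for convergence of the Rauzy digraphs to the directed line.) -/

import Mathlib

open Filter Topology

variable {A : Type*}

/-- The set of words of `L` of length `n`. -/
def Ln (L : Set (List A)) (n : ℕ) : Set (List A) := {w | w ∈ L ∧ w.length = n}

/-- The complexity function `p n = |L_n|`. -/
noncomputable def cplx (L : Set (List A)) (n : ℕ) : ℕ := Nat.card (Ln L n)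

/-- A language is factorial if it is closed under taking contiguous subwords. -/
def IsFactorial (L : Set (List A)) : Prop := ∀ u v : List A, u ∈ L → v <:+: u → v ∈ L

/-- `w` is left-prolongable in `L`. -/
def LeftProlongable (L : Set (List A)) (w : List A) : Prop := ∃ a : A, (a :: w) ∈ L

/-- `w` is right-prolongable in `L`. -/
def RightProlongable (L : Set (List A)) (w : List A) : Prop := ∃ b : A, (w ++ [b]) ∈ L

/-- `e_l(n)`: the number of words of length `n` in `L` that are not left-prolongable. -/
noncomputable def eL (L : Set (List A)) (n : ℕ) : ℕ :=
  Nat.card {w : List A | w ∈ Ln L n ∧ ¬ LeftProlongable L w}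

/-- `e_r(n)`: the number of words of length `n` in `L` that are not right-prolongable. -/
noncomputable def eR (L : Set (List A)) (n : ℕ) : ℕ :=
  Nat.card {w : List A | w ∈ Ln L n ∧ ¬ RightProlongable L w}

/-- `L` is almost prolongable: `e_l(n)/p(n) → 0` and `e_r(n)/p(n) → 0`. -/
def AlmostProlongable (L : Set (List A)) : Prop :=
  Tendsto (fun n => (eL L n : ℝ) / (cplx L n : ℝ)) atTop (𝓝 0) ∧
  Tendsto (fun n => (eR L n : ℝ) / (cplx L n : ℝ)) atTop (𝓝 0)

/-- `r(n)`: words of length `n` having exactly one left and exactly one right prolongation. -/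
noncomputable def rBoth (L : Set (List A)) (n : ℕ) : ℕ :=
  Nat.card {w : List A | w ∈ Ln L n ∧ (∃! a : A, (a :: w) ∈ L) ∧ (∃! b : A, (w ++ [b]) ∈ L)}

lemma ln_finite [Fintype A] (L : Set (List A)) (n : ℕ) : (Ln L n).Finite :=
  (List.finite_length_eq (α := A) n).subset fun _ hw => hw.2

lemma second_ext {L : Set (List A)} {w : List A} (h : RightProlongable L w)
    (h2 : ¬ ∃! b : A, (w ++ [b]) ∈ L) : ∃ b : A, (w ++ [b]) ∈ L ∧ b ≠ h.choose := by
  by_contra hc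
  push_neg at hc
  exact h2 ⟨h.choose, h.choose_spec, fun y hy => hc y hy⟩

lemma second_ext_l {L : Set (List A)} {w : List A} (h : LeftProlongable L w)
    (h2 : ¬ ∃! a : A, (a :: w) ∈ L) : ∃ a : A, (a :: w) ∈ L ∧ a ≠ h.choose := by
  by_contra hc
  push_neg at hc
  exact h2 ⟨h.choose, h.choose_spec, fun y hy => hc y hy⟩

lemma right_count [Fintype A] (L : Set (List A)) (n : ℕ) :
    Nat.card {w : List A | w ∈ Ln L n ∧ RightProlongable L w} +
    Nat.card {w : List A | w ∈ Ln L n ∧ RightProlongable L w ∧ ¬ ∃! b : A, (w ++ [b]) ∈ L}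
    ≤ cplx L (n + 1) := by
  classical
  haveI : Finite ↥(Ln L (n+1)) := (ln_finite L (n+1)).to_subtype
  haveI : Finite ↥{w : List A | w ∈ Ln L n ∧ RightProlongable L w} :=
    ((ln_finite L n).subset (fun _ h => h.1)).to_subtype
  haveI : Finite ↥{w : List A | w ∈ Ln L n ∧ RightProlongable L w ∧ ¬ ∃! b : A, (w ++ [b]) ∈ L} :=
    ((ln_finite L n).subset (fun _ h => h.1)).to_subtype
  rw [← Nat.card_sum]
  set f : (↥{w : List A | w ∈ Ln L n ∧ RightProlongable L w} ⊕
      ↥{w : List A | w ∈ Ln L n ∧ RightProlongable L w ∧ ¬ ∃! b : A, (w ++ [b]) ∈ L}) →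
      ↥(Ln L (n+1)) := fun x =>
    match x with
    | Sum.inl ⟨w, hw⟩ => ⟨w ++ [hw.2.choose],
        ⟨hw.2.choose_spec, by simp [hw.1.2]⟩⟩
    | Sum.inr ⟨w, hw⟩ => ⟨w ++ [(second_ext hw.2.1 hw.2.2).choose],
        ⟨(second_ext hw.2.1 hw.2.2).choose_spec.1, by simp [hw.1.2]⟩⟩ with hf
  apply Nat.card_le_card_of_injective f
  rintro (⟨w1, hw1⟩ | ⟨w1, hw1⟩) (⟨w2, hw2⟩ | ⟨w2, hw2⟩) h <;>
    simp only [hf, Subtype.mk.injEq] at h <;>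
    obtain ⟨rfl, hb⟩ := List.append_inj (congrArg Subtype.val h) (by rw [hw1.1.2, hw2.1.2]) <;>
    simp_all only [List.cons.injEq, and_true]
  · exact absurd hb.symm (second_ext hw2.2.1 hw2.2.2).choose_spec.2
  · exact absurd hb (second_ext hw1.2.1 hw1.2.2).choose_spec.2

lemma left_count [Fintype A] (L : Set (List A)) (n : ℕ) :
    Nat.card {w : List A | w ∈ Ln L n ∧ LeftProlongable L w} +
    Nat.card {w : List A | w ∈ Ln L n ∧ LeftProlongable L w ∧ ¬ ∃! a : A, (a :: w) ∈ L}
    ≤ cplx L (n + 1) := by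
  classical
  haveI : Finite ↥(Ln L (n+1)) := (ln_finite L (n+1)).to_subtype
  haveI : Finite ↥{w : List A | w ∈ Ln L n ∧ LeftProlongable L w} :=
    ((ln_finite L n).subset (fun _ h => h.1)).to_subtype
  haveI : Finite ↥{w : List A | w ∈ Ln L n ∧ LeftProlongable L w ∧ ¬ ∃! a : A, (a :: w) ∈ L} :=
    ((ln_finite L n).subset (fun _ h => h.1)).to_subtype
  rw [← Nat.card_sum]
  set f : (↥{w : List A | w ∈ Ln L n ∧ LeftProlongable L w} ⊕
      ↥{w : List A | w ∈ Ln L n ∧ LeftProlongable L w ∧ ¬ ∃! a : A, (a :: w) ∈ L}) →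
      ↥(Ln L (n+1)) := fun x =>
    match x with
    | Sum.inl ⟨w, hw⟩ => ⟨hw.2.choose :: w, ⟨hw.2.choose_spec, by simp [hw.1.2]⟩⟩
    | Sum.inr ⟨w, hw⟩ => ⟨(second_ext_l hw.2.1 hw.2.2).choose :: w,
        ⟨(second_ext_l hw.2.1 hw.2.2).choose_spec.1, by simp [hw.1.2]⟩⟩ with hf
  apply Nat.card_le_card_of_injective f
  rintro (⟨w1, hw1⟩ | ⟨w1, hw1⟩) (⟨w2, hw2⟩ | ⟨w2, hw2⟩) h <;>
    simp only [hf, Subtype.mk.injEq, List.cons.injEq] at h <;>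
    obtain ⟨hb, rfl⟩ := List.cons.inj (congrArg Subtype.val h) <;> simp only [Sum.inl.injEq, Sum.inr.injEq, Subtype.mk.injEq, reduceCtorEq]
  · exact absurd hb.symm (second_ext_l hw2.2.1 hw2.2.2).choose_spec.2
  · exact absurd hb (second_ext_l hw1.2.1 hw1.2.2).choose_spec.2

lemma cover_r [Fintype A] (L : Set (List A)) (n : ℕ) :
    cplx L n ≤ eR L n + Nat.card {w : List A | w ∈ Ln L n ∧ RightProlongable L w} := by
  rw [cplx, eR, Nat.card_coe_set_eq, Nat.card_coe_set_eq, Nat.card_coe_set_eq]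
  refine le_trans (Set.ncard_le_ncard (fun w hw => ?_)
    (((ln_finite L n).subset (fun _ h => h.1)).union
      ((ln_finite L n).subset (fun _ h => h.1)))) (Set.ncard_union_le _ _)
  by_cases h : RightProlongable L w
  · exact Or.inr ⟨hw, h⟩
  · exact Or.inl ⟨hw, h⟩

lemma cover_l [Fintype A] (L : Set (List A)) (n : ℕ) :
    cplx L n ≤ eL L n + Nat.card {w : List A | w ∈ Ln L n ∧ LeftProlongable L w} := by
  rw [cplx, eL, Nat.card_coe_set_eq, Nat.card_coe_set_eq, Nat.card_coe_set_eq]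
  refine le_trans (Set.ncard_le_ncard (fun w hw => ?_)
    (((ln_finite L n).subset (fun _ h => h.1)).union
      ((ln_finite L n).subset (fun _ h => h.1)))) (Set.ncard_union_le _ _)
  by_cases h : LeftProlongable L w
  · exact Or.inr ⟨hw, h⟩
  · exact Or.inl ⟨hw, h⟩

lemma cover_main [Fintype A] (L : Set (List A)) (n : ℕ) :
    cplx L n ≤ rBoth L n + eL L n
      + Nat.card {w : List A | w ∈ Ln L n ∧ LeftProlongable L w ∧ ¬ ∃! a : A, (a :: w) ∈ L}
      + eR L n
      + Nat.card {w : List A | w ∈ Ln L n ∧ RightProlongable L w ∧ ¬ ∃! b : A, (w ++ [b]) ∈ L} := by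
  classical
  rw [cplx, rBoth, eL, eR, Nat.card_coe_set_eq, Nat.card_coe_set_eq,
    Nat.card_coe_set_eq, Nat.card_coe_set_eq, Nat.card_coe_set_eq,
    Nat.card_coe_set_eq]
  have hfin : ∀ s : Set (List A), s ⊆ Ln L n → s.Finite := fun s hs =>
    (ln_finite L n).subset hs
  have hsub : Ln L n ⊆ ({w : List A | w ∈ Ln L n ∧ (∃! a : A, (a :: w) ∈ L) ∧ (∃! b : A, (w ++ [b]) ∈ L)}
      ∪ {w : List A | w ∈ Ln L n ∧ ¬ LeftProlongable L w}
      ∪ {w : List A | w ∈ Ln L n ∧ LeftProlongable L w ∧ ¬ ∃! a : A, (a :: w) ∈ L}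
      ∪ {w : List A | w ∈ Ln L n ∧ ¬ RightProlongable L w}
      ∪ {w : List A | w ∈ Ln L n ∧ RightProlongable L w ∧ ¬ ∃! b : A, (w ++ [b]) ∈ L}) := by
    intro w hw
    simp only [Set.mem_union, Set.mem_setOf_eq]
    by_cases hl : ∃! a : A, (a :: w) ∈ L
    · by_cases hr : ∃! b : A, (w ++ [b]) ∈ L
      · exact Or.inl (Or.inl (Or.inl (Or.inl ⟨hw, hl, hr⟩)))
      · by_cases hrp : RightProlongable L w
        · exact Or.inr ⟨hw, hrp, hr⟩
        · exact Or.inl (Or.inr ⟨hw, hrp⟩)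
    · by_cases hlp : LeftProlongable L w
      · exact Or.inl (Or.inl (Or.inr ⟨hw, hlp, hl⟩))
      · exact Or.inl (Or.inl (Or.inl (Or.inr ⟨hw, hlp⟩)))
  refine le_trans (Set.ncard_le_ncard hsub
    (((((hfin _ fun _ h => h.1).union (hfin _ fun _ h => h.1)).union
      (hfin _ fun _ h => h.1)).union (hfin _ fun _ h => h.1)).union (hfin _ fun _ h => h.1))) ?_
  refine (Set.ncard_union_le _ _).trans (add_le_add_left ?_ _)
  refine (Set.ncard_union_le _ _).trans (add_le_add_left ?_ _)
  refine (Set.ncard_union_le _ _).trans (add_le_add_left ?_ _)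
  exact Set.ncard_union_le _ _

lemma rBoth_le [Fintype A] (L : Set (List A)) (n : ℕ) : rBoth L n ≤ cplx L n := by
  rw [cplx, rBoth, Nat.card_coe_set_eq, Nat.card_coe_set_eq]
  exact Set.ncard_le_ncard (fun w hw => hw.1) (ln_finite L n)

theorem rauzy_convergence_of_asymptotic_polynomial_complexity {A : Type*} [Fintype A]
    (L : Set (List A)) (hfac : IsFactorial L) (hap : AlmostProlongable L)
    (hne : ∀ n : ℕ, (Ln L n).Nonempty)
    (α : ℝ) (hα : 1 ≤ α)
    (hasym : Tendsto (fun n => (cplx L n : ℝ) / (n : ℝ) ^ α) atTop (𝓝 1)) :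
    Tendsto (fun n => (cplx L (n + 1) : ℝ) / (cplx L n : ℝ)) atTop (𝓝 1) ∧
    Tendsto (fun n => (rBoth L n : ℝ) / (cplx L n : ℝ)) atTop (𝓝 1) := by
  have hpos : ∀ n : ℕ, (0:ℝ) < (cplx L n : ℝ) := by
    intro n
    haveI := (ln_finite L n).to_subtype
    haveI := (hne n).to_subtype
    exact_mod_cast Nat.card_pos (α := ↥(Ln L n))
  -- first limit
  have h2 : Tendsto (fun n : ℕ => (cplx L (n+1) : ℝ) / ((n:ℝ)+1) ^ α) atTop (𝓝 1) := by
    apply (hasym.comp (tendsto_add_atTop_nat 1)).congr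
    intro n
    simp only [Function.comp_apply]
    push_cast
    ring
  have h3 : Tendsto (fun n : ℕ => (((n:ℝ)+1)/(n:ℝ)) ^ α) atTop (𝓝 1) := by
    have hb : Tendsto (fun n : ℕ => ((n:ℝ)+1)/(n:ℝ)) atTop (𝓝 1) := by
      have h0 : Tendsto (fun n : ℕ => 1 + 1/(n:ℝ)) atTop (𝓝 1) := by
        simpa using (tendsto_const_nhds (x := (1:ℝ))).add tendsto_one_div_atTop_nhds_zero_nat
      apply h0.congr'
      filter_upwards [eventually_gt_atTop 0] with n hn
      have : (0:ℝ) < (n:ℝ) := by exact_mod_cast hn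
      field_simp
    simpa using hb.rpow (tendsto_const_nhds (x := α)) (Or.inl one_ne_zero)
  have h1 : Tendsto (fun n => (cplx L (n + 1) : ℝ) / (cplx L n : ℝ)) atTop (𝓝 1) := by
    have hd := (h2.mul h3).div hasym one_ne_zero
    rw [show (1:ℝ)*1/1 = 1 by norm_num] at hd
    apply hd.congr'
    filter_upwards [eventually_gt_atTop 0] with n hn
    have hx : (0:ℝ) < (n:ℝ) := by exact_mod_cast hn
    have hx1 : (0:ℝ) < (n:ℝ)+1 := by linarith
    have hxa : (0:ℝ) < (n:ℝ)^α := Real.rpow_pos_of_pos hx α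
    have hx1a : (0:ℝ) < ((n:ℝ)+1)^α := Real.rpow_pos_of_pos hx1 α
    simp only [Pi.div_apply]
    rw [Real.div_rpow hx1.le hx.le]
    have hp := (hpos n).ne'
    field_simp
  refine ⟨h1, ?_⟩
  -- second limit
  have key : ∀ n : ℕ, 1 - (rBoth L n : ℝ) / (cplx L n : ℝ) ≤
      2*((eL L n : ℝ)/(cplx L n : ℝ)) + 2*((eR L n : ℝ)/(cplx L n : ℝ))
        + 2*((cplx L (n+1) : ℝ)/(cplx L n : ℝ) - 1) := by
    intro n
    have hp := (hpos n).ne'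
    have hcm := cover_main L n
    have hcr := cover_r L n
    have hcl := cover_l L n
    have hrc := right_count L n
    have hlc := left_count L n
    have hcmR : (cplx L n : ℝ) ≤ rBoth L n + eL L n
        + Nat.card {w : List A | w ∈ Ln L n ∧ LeftProlongable L w ∧ ¬ ∃! a : A, (a :: w) ∈ L}
        + eR L n
        + Nat.card {w : List A | w ∈ Ln L n ∧ RightProlongable L w ∧ ¬ ∃! b : A, (w ++ [b]) ∈ L} := by
      exact_mod_cast hcm
    have hcrR : (cplx L n : ℝ) ≤ eR L n
        + Nat.card {w : List A | w ∈ Ln L n ∧ RightProlongable L w} := by exact_mod_cast hcr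
    have hclR : (cplx L n : ℝ) ≤ eL L n
        + Nat.card {w : List A | w ∈ Ln L n ∧ LeftProlongable L w} := by exact_mod_cast hcl
    have hrcR : (Nat.card {w : List A | w ∈ Ln L n ∧ RightProlongable L w} : ℝ)
        + Nat.card {w : List A | w ∈ Ln L n ∧ RightProlongable L w ∧ ¬ ∃! b : A, (w ++ [b]) ∈ L}
        ≤ cplx L (n+1) := by exact_mod_cast hrc
    have hlcR : (Nat.card {w : List A | w ∈ Ln L n ∧ LeftProlongable L w} : ℝ)
        + Nat.card {w : List A | w ∈ Ln L n ∧ LeftProlongable L w ∧ ¬ ∃! a : A, (a :: w) ∈ L}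
        ≤ cplx L (n+1) := by exact_mod_cast hlc
    rw [one_sub_div hp]
    rw [div_le_iff₀ (hpos n)]
    have e1 : (eL L n : ℝ)/(cplx L n) * (cplx L n) = eL L n := div_mul_cancel₀ _ hp
    have e2 : (eR L n : ℝ)/(cplx L n) * (cplx L n) = eR L n := div_mul_cancel₀ _ hp
    have e3 : (cplx L (n+1) : ℝ)/(cplx L n) * (cplx L n) = cplx L (n+1) := div_mul_cancel₀ _ hp
    nlinarith [hcmR, hcrR, hclR, hrcR, hlcR]
  have key0 : ∀ n : ℕ, 0 ≤ 1 - (rBoth L n : ℝ) / (cplx L n : ℝ) := by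
    intro n
    have : (rBoth L n : ℝ) / (cplx L n : ℝ) ≤ 1 := by
      rw [div_le_one (hpos n)]
      exact_mod_cast rBoth_le L n
    linarith
  have hE : Tendsto (fun n : ℕ => 2*((eL L n : ℝ)/(cplx L n : ℝ))
      + 2*((eR L n : ℝ)/(cplx L n : ℝ)) + 2*((cplx L (n+1) : ℝ)/(cplx L n : ℝ) - 1))
      atTop (𝓝 0) := by
    have := ((hap.1.const_mul 2).add (hap.2.const_mul 2)).add ((h1.sub_const 1).const_mul 2)
    simpa using this
  have hto : Tendsto (fun n : ℕ => 1 - (rBoth L n : ℝ)/(cplx L n : ℝ)) atTop (𝓝 0) :=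
    squeeze_zero key0 key hE
  have := (tendsto_const_nhds (x := (1:ℝ)) (f := atTop (α := ℕ))).sub hto
  simp only [sub_zero] at this
  exact this.congr (fun n => by ring)
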